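/- The squared RKHS distance between the empirical joint embedding and the product of empirical marginal embeddings equals (1/n²)(K̃ ∘ L̃)_{++}: that is, ‖(1/n)∑_i φ_X(x_i)⊗φ_Y(y_i) − ((1/n)∑_i φ_X(x_i)) ⊗ ((1/n)∑_i φ_Y(y_i))‖² = (1/n²)∑_{i,j} K̃_{ij} L̃_{ij}. -/

import Mathlib

open scoped RealInnerProductSpace

/-- the squared RKHS distance between the empirical joint embedding
and the product of empirical marginal embeddings equals (1/n²)(K̃ ∘ L̃)_{++}.
The Hilbert space tensor product is modelled abstractly by a Hilbert space `W`
together with a bilinear map `T` satisfying ⟪T a b, T c d⟫ = ⟪a,c⟫⟪b,d⟫. -/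
theorem hsic_norm_eq_centered_gram
    {X Y : Type*} {HX HY W : Type*}
    [NormedAddCommGroup HX] [InnerProductSpace ℝ HX]
    [NormedAddCommGroup HY] [InnerProductSpace ℝ HY]
    [NormedAddCommGroup W] [InnerProductSpace ℝ W]
    (T : HX →ₗ[ℝ] HY →ₗ[ℝ] W)
    (hT : ∀ (a c : HX) (b d : HY), ⟪T a b, T c d⟫ = ⟪a, c⟫ * ⟪b, d⟫)
    (n : ℕ) (hn : 1 ≤ n) (x : Fin n → X) (y : Fin n → Y)
    (φX : X → HX) (φY : Y → HY) :
    ‖(n : ℝ)⁻¹ • (∑ i, T (φX (x i)) (φY (y i)))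
        - T ((n : ℝ)⁻¹ • ∑ i, φX (x i)) ((n : ℝ)⁻¹ • ∑ i, φY (y i))‖ ^ 2
      = ((n : ℝ) ^ 2)⁻¹ *
        ∑ i, ∑ j,
          (⟪φX (x i) - (n : ℝ)⁻¹ • ∑ k, φX (x k),
            φX (x j) - (n : ℝ)⁻¹ • ∑ k, φX (x k)⟫
          * ⟪φY (y i) - (n : ℝ)⁻¹ • ∑ k, φY (y k),
              φY (y j) - (n : ℝ)⁻¹ • ∑ k, φY (y k)⟫) := by
  have hn0 : (n : ℝ) ≠ 0 := Nat.cast_ne_zero.mpr (by omega)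
  set μX : HX := (n : ℝ)⁻¹ • ∑ k, φX (x k) with hμX
  set μY : HY := (n : ℝ)⁻¹ • ∑ k, φY (y k) with hμY
  have hSX : ∑ i, φX (x i) = (n : ℝ) • μX := by
    rw [hμX, smul_smul, mul_inv_cancel₀ hn0, one_smul]
  have hSY : ∑ i, φY (y i) = (n : ℝ) • μY := by
    rw [hμY, smul_smul, mul_inv_cancel₀ hn0, one_smul]
  have key : (n : ℝ)⁻¹ • (∑ i, T (φX (x i)) (φY (y i))) - T μX μY
      = (n : ℝ)⁻¹ • ∑ i, T (φX (x i) - μX) (φY (y i) - μY) := by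
    have expand : ∑ i, T (φX (x i) - μX) (φY (y i) - μY)
        = ∑ i, T (φX (x i)) (φY (y i)) - (n : ℝ) • T μX μY := by
      have : ∀ i : Fin n, T (φX (x i) - μX) (φY (y i) - μY)
          = T (φX (x i)) (φY (y i)) - T (φX (x i)) μY - T μX (φY (y i))
            + T μX μY := by
        intro i
        simp [map_sub, LinearMap.sub_apply]
        abel
      rw [Finset.sum_congr rfl fun i _ => this i]
      simp only [Finset.sum_add_distrib, Finset.sum_sub_distrib,
        Finset.sum_const, Finset.card_univ, Fintype.card_fin]
      have h1 : ∑ i, T (φX (x i)) μY = (n : ℝ) • T μX μY := by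
        rw [← LinearMap.sum_apply, ← map_sum, hSX]; simp
      have h2 : (∑ i, T μX (φY (y i))) = (n : ℝ) • T μX μY := by
        rw [← map_sum, hSY]; simp
      rw [h1, h2, ← Nat.cast_smul_eq_nsmul ℝ]
      push_cast
      abel
    rw [expand, smul_sub, smul_smul, inv_mul_cancel₀ hn0, one_smul]
  rw [key]
  rw [norm_smul, mul_pow, norm_inv, Real.norm_natCast,
    ← @real_inner_self_eq_norm_sq, ← inv_pow]
  congr 1
  rw [inner_sum]
  refine Finset.sum_congr rfl fun i _ => ?_
  rw [sum_inner]
  refine Finset.sum_congr rfl fun j _ => ?_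
  rw [hT, real_inner_comm (φX (x j) - μX), real_inner_comm (φY (y j) - μY)]
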